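/- Fix a natural number k ≥ 1. For each natural number N ≥ 1 let P̃_{k,N} = I + (2/√N)·U be the (k+1)×(k+1) real matrix, where U is the upper shift matrix (U[i, i+1] = 1 and all other entries 0). Then: (a) for every natural number n, the (1, k+1) entry of (P̃_{k,N})ⁿ equals binom(n, k)·(2/√N)^k; (b) for every real c ≥ 0, lim_{N→∞} of the (1, k+1) entry of (P̃_{k,N})^{⌊c·√N⌋} equals (2c)^k / k!. (This is the paper's lower-bound computation: the amplitude transported along a path of k+1 Grover operators, with the backward-rotation terms removed, after ⌊c√N⌋ steps tends to (2c)^k/k!.) -/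

import Mathlib

open Matrix Filter

/-- The upper shift matrix on `Fin (k+1)`. -/
def upperShift (k : ℕ) : Matrix (Fin (k + 1)) (Fin (k + 1)) ℝ :=
  fun i j => if (i : ℕ) + 1 = (j : ℕ) then 1 else 0

/-- The approximated path matrix `P̃_{k,N} = I + (2/√N)·U`. -/
noncomputable def Ptilde (k N : ℕ) : Matrix (Fin (k + 1)) (Fin (k + 1)) ℝ :=
  1 + (2 / Real.sqrt N) • upperShift k

lemma upperShift_pow (k : ℕ) : ∀ (m : ℕ) (i j : Fin (k + 1)),
    (upperShift k ^ m) i j = if (i : ℕ) + m = (j : ℕ) then 1 else 0 := by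
  intro m
  induction m with
  | zero =>
    intro i j
    simp [Matrix.one_apply, Fin.ext_iff]
  | succ m ih =>
    intro i j
    rw [pow_succ, Matrix.mul_apply]
    by_cases h : (i : ℕ) + m ≤ k
    · set l₀ : Fin (k + 1) := ⟨(i : ℕ) + m, by omega⟩ with hl₀
      have hv : (l₀ : ℕ) = (i : ℕ) + m := rfl
      rw [Finset.sum_eq_single l₀]
      · simp [ih, upperShift, hv, add_assoc]
      · intro b _ hb
        have hne : (i : ℕ) + m ≠ (b : ℕ) := by
          intro hcon
          exact hb (Fin.ext (by rw [hv, ← hcon]))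
        simp [ih, hne]
      · intro hmem; exact absurd (Finset.mem_univ l₀) hmem
    · rw [Finset.sum_eq_zero, eq_comm, if_neg]
      · have := j.isLt; omega
      · intro l _
        rw [ih, if_neg]
        · exact zero_mul _
        · have := l.isLt; omega

lemma corner_entry (k n : ℕ) (t : ℝ) :
    ((1 + t • upperShift k) ^ n) 0 (Fin.last k) = (n.choose k : ℝ) * t ^ k := by
  have hc : Commute (t • upperShift k) (1 : Matrix (Fin (k+1)) (Fin (k+1)) ℝ) :=
    Commute.one_right _
  rw [show (1 + t • upperShift k) = (t • upperShift k + 1) from add_comm _ _,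
    hc.add_pow', Matrix.sum_apply,
    Finset.Nat.sum_antidiagonal_eq_sum_range_succ_mk
      (fun ij => ((n.choose ij.1 • ((t • upperShift k) ^ ij.1 * 1 ^ ij.2)) 0 (Fin.last k)))]
  have hterm : ∀ m : ℕ,
      ((n.choose m • ((t • upperShift k) ^ m * 1 ^ (n - m))) 0 (Fin.last k)) =
        if m = k then (n.choose m : ℝ) * t ^ m else 0 := by
    intro m
    rw [one_pow, mul_one, smul_pow]
    simp only [Matrix.smul_apply, upperShift_pow, Fin.val_last, Fin.val_zero, zero_add,
      smul_eq_mul, nsmul_eq_mul]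
    by_cases h : m = k <;> simp [h, mul_comm]
  simp only [hterm]
  rw [Finset.sum_ite_eq' (Finset.range (n + 1)) k (fun m => (n.choose m : ℝ) * t ^ m)]
  by_cases h : k ∈ Finset.range (n + 1)
  · rw [if_pos h]
  · rw [if_neg h]
    have : n < k := by simpa [Finset.mem_range] using h
    rw [Nat.choose_eq_zero_of_lt this]
    simp

lemma sqrt_tendsto_atTop : Tendsto (fun N : ℕ => Real.sqrt N) atTop atTop := by
  rw [tendsto_atTop_atTop]
  intro b
  refine ⟨⌈b * b⌉₊, fun N hN => ?_⟩
  rcases le_or_gt b 0 with hb | hb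
  · exact hb.trans (Real.sqrt_nonneg _)
  · have h1 : b * b ≤ (N : ℝ) := le_trans (Nat.le_ceil _) (by exact_mod_cast hN)
    calc b = Real.sqrt (b * b) := by rw [Real.sqrt_mul_self hb.le]
    _ ≤ Real.sqrt N := Real.sqrt_le_sqrt h1

theorem path_matrix_corner_entry (k : ℕ) (hk : 1 ≤ k) :
    (∀ N : ℕ, 1 ≤ N → ∀ n : ℕ,
      (Ptilde k N ^ n) 0 (Fin.last k) = (n.choose k : ℝ) * (2 / Real.sqrt N) ^ k) ∧
    (∀ c : ℝ, 0 ≤ c →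
      Tendsto (fun N : ℕ => (Ptilde k N ^ ⌊c * Real.sqrt N⌋₊) 0 (Fin.last k))
        atTop (nhds ((2 * c) ^ k / (Nat.factorial k : ℝ)))) := by
  have hA : ∀ N n : ℕ,
      (Ptilde k N ^ n) 0 (Fin.last k) = (n.choose k : ℝ) * (2 / Real.sqrt N) ^ k := by
    intro N n; exact corner_entry k n _
  refine ⟨fun N _ n => hA N n, ?_⟩
  intro c hc
  rcases eq_or_lt_of_le hc with hc0 | hcpos
  · -- c = 0
    have hfun : ∀ N : ℕ, (Ptilde k N ^ ⌊c * Real.sqrt N⌋₊) 0 (Fin.last k) = 0 := by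
      intro N
      rw [hA, ← hc0]
      simp [Nat.choose_eq_zero_of_lt (by omega : 0 < k)]
    have : ((2 * c) ^ k / (Nat.factorial k : ℝ)) = 0 := by
      rw [← hc0]; simp [zero_pow (by omega : k ≠ 0)]
    rw [this]
    simpa [hfun] using tendsto_const_nhds (α := ℝ) (f := atTop (α := ℕ))
  · -- c > 0
    have hratio : Tendsto (fun N : ℕ => (⌊c * Real.sqrt N⌋₊ : ℝ) / Real.sqrt N)
        atTop (nhds c) := by
      have hlow : Tendsto (fun N : ℕ => c - 1 / Real.sqrt N) atTop (nhds c) := by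
        have h0 : Tendsto (fun N : ℕ => 1 / Real.sqrt N) atTop (nhds 0) := by
          simpa [one_div, Pi.inv_def] using sqrt_tendsto_atTop.inv_tendsto_atTop
        simpa using tendsto_const_nhds.sub h0
      refine tendsto_of_tendsto_of_tendsto_of_le_of_le' hlow tendsto_const_nhds ?_ ?_
      · filter_upwards [eventually_ge_atTop 1] with N hN
        have hs : (0 : ℝ) < Real.sqrt N := Real.sqrt_pos.2 (by exact_mod_cast hN)
        have hfl : c * Real.sqrt N - 1 < (⌊c * Real.sqrt N⌋₊ : ℝ) := Nat.sub_one_lt_floor _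
        have h1 : c - 1 / Real.sqrt N = (c * Real.sqrt N - 1) / Real.sqrt N := by
          field_simp
        rw [h1, div_le_div_iff₀ hs hs]
        nlinarith
      · filter_upwards [eventually_ge_atTop 1] with N hN
        have hs : (0 : ℝ) < Real.sqrt N := Real.sqrt_pos.2 (by exact_mod_cast hN)
        rw [div_le_iff₀ hs]
        exact Nat.floor_le (by positivity)
    have hfloor_top : Tendsto (fun N : ℕ => ⌊c * Real.sqrt N⌋₊) atTop atTop :=
      tendsto_nat_floor_atTop.comp (sqrt_tendsto_atTop.const_mul_atTop hcpos)
    -- each factor tends to 2c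
    have hfac : ∀ i : ℕ, i < k →
        Tendsto (fun N : ℕ => ((⌊c * Real.sqrt N⌋₊ - i : ℕ) : ℝ) * (2 / Real.sqrt N))
          atTop (nhds (2 * c)) := by
      intro i _
      have h2 : Tendsto (fun N : ℕ => 2 / Real.sqrt N) atTop (nhds 0) := by
        have := sqrt_tendsto_atTop.inv_tendsto_atTop
        have h := this.const_mul (2 : ℝ)
        simpa [div_eq_mul_inv] using h
      have hmain : Tendsto
          (fun N : ℕ => ((⌊c * Real.sqrt N⌋₊ : ℝ) / Real.sqrt N) * 2 -
            (i : ℝ) * (2 / Real.sqrt N)) atTop (nhds (2 * c)) := by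
        have := (hratio.mul_const 2).sub ((h2.const_mul (i : ℝ)).mono_left le_rfl)
        simpa [mul_comm] using this
      refine Tendsto.congr' ?_ hmain
      filter_upwards [hfloor_top.eventually_ge_atTop i, eventually_ge_atTop 1] with N hNi hN1
      have hs : (0 : ℝ) < Real.sqrt N := Real.sqrt_pos.2 (by exact_mod_cast hN1)
      rw [Nat.cast_sub hNi]
      field_simp
    -- product form
    have hprod : Tendsto
        (fun N : ℕ => ∏ i ∈ Finset.range k,
          (((⌊c * Real.sqrt N⌋₊ - i : ℕ) : ℝ) * (2 / Real.sqrt N)))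
        atTop (nhds ((2 * c) ^ k)) := by
      have := tendsto_finset_prod (Finset.range k)
        (f := fun i (N : ℕ) => ((⌊c * Real.sqrt N⌋₊ - i : ℕ) : ℝ) * (2 / Real.sqrt N))
        (a := fun _ => 2 * c) (fun i hi => hfac i (Finset.mem_range.mp hi))
      simpa [Finset.prod_const] using this
    have key : ∀ N : ℕ,
        (Ptilde k N ^ ⌊c * Real.sqrt N⌋₊) 0 (Fin.last k) =
          (∏ i ∈ Finset.range k,
            (((⌊c * Real.sqrt N⌋₊ - i : ℕ) : ℝ) * (2 / Real.sqrt N))) / (Nat.factorial k : ℝ) := by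
      intro N
      rw [hA]
      set n := ⌊c * Real.sqrt N⌋₊
      set t := 2 / Real.sqrt N
      rw [Finset.prod_mul_distrib, Finset.prod_const, Finset.card_range,
        ← Nat.cast_prod, ← Nat.descFactorial_eq_prod_range,
        Nat.descFactorial_eq_factorial_mul_choose]
      push_cast
      field_simp
    simp only [key]
    exact hprod.div_const _
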